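/- Let Φ ∈ 𝒮(ℝ) be a Schwartz function and n₀ ∈ ℕ. Define for Re(s) > 0 the function Z(s) = ∫_{ℝˣ} Φ(a)|a|^s (log|a|)^{n₀} da/|a|. Then s^{n₀+1}·Z(s), initially defined for Re(s) > 0, extends to a function holomorphic on a neighborhood of s = 0 when restricted to even Schwartz functions Φ with Φ(0) arbitrary; more precisely, Z(s) - 2Φ(0)·(-1)^{n₀} n₀! / s^{n₀+1} extends holomorphically past Re(s) > -1. -/

import Mathlib

open MeasureTheory
open Set Filter Asymptotics Real Topology


-- even integral lemma, ℂ-valued version of integral_comp_abs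
theorem my_integral_comp_abs (f : ℝ → ℂ) :
    ∫ x, f |x| = 2 * ∫ x in Ioi (0 : ℝ), f x := by
  have eq : ∫ (x : ℝ) in Ioi 0, f |x| = ∫ (x : ℝ) in Ioi 0, f x := by
    refine setIntegral_congr_fun measurableSet_Ioi (fun _ hx => ?_)
    rw [abs_eq_self.mpr (le_of_lt (by exact hx))]
  by_cases hf : IntegrableOn (fun x => f |x|) (Ioi 0)
  · have int_Iic : IntegrableOn (fun x ↦ f |x|) (Iic 0) := by
      rw [← Measure.map_neg_eq_self (volume : Measure ℝ)]
      let m : MeasurableEmbedding fun x : ℝ => -x := (Homeomorph.neg ℝ).measurableEmbedding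
      rw [m.integrableOn_map_iff]
      simp_rw [Function.comp_def, abs_neg, neg_preimage, neg_Iic, neg_zero]
      exact Iff.mpr integrableOn_Ici_iff_integrableOn_Ioi hf
    calc
      _ = (∫ x in Iic 0, f |x|) + ∫ x in Ioi 0, f |x| := by
        rw [← setIntegral_union (Iic_disjoint_Ioi le_rfl) measurableSet_Ioi int_Iic hf,
          Iic_union_Ioi, Measure.restrict_univ]
      _ = 2 * ∫ x in Ioi 0, f x := by
        rw [two_mul, eq]
        congr! 1
        rw [← neg_zero, ← integral_comp_neg_Iic, neg_zero]
        refine setIntegral_congr_fun measurableSet_Iic (fun _ hx => ?_)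
        rw [abs_eq_neg_self.mpr (by exact hx)]
  · have : ¬ Integrable (fun x => f |x|) := by
      contrapose! hf
      exact hf.integrableOn
    rw [← eq, integral_undef hf, integral_undef this, mul_zero]


theorem logpow_mul_isBigO_zero (n : ℕ) {F : ℝ → ℂ} {A : ℝ} :
    ∀ {b : ℝ}, A < b → F =O[𝓝[>] (0:ℝ)] (· ^ (-A)) →
    (fun x : ℝ => (Real.log x : ℂ) ^ n * F x) =O[𝓝[>] (0:ℝ)] (· ^ (-b)) := by
  induction n with
  | zero =>
    intro b hab hF
    simp only [pow_zero, one_mul]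
    refine hF.trans (IsBigO.of_bound 1 ?_)
    filter_upwards [Ioc_mem_nhdsGT one_pos] with x hx
    rw [one_mul, Real.norm_eq_abs, Real.norm_eq_abs,
      abs_of_nonneg (Real.rpow_nonneg hx.1.le _), abs_of_nonneg (Real.rpow_nonneg hx.1.le _)]
    exact Real.rpow_le_rpow_of_exponent_ge hx.1 hx.2 (by linarith)
  | succ n ih =>
    intro b hab hF
    have h1 : A < (A + b) / 2 := by linarith
    have h2 : (A + b) / 2 < b := by linarith
    have := isBigO_rpow_zero_log_smul (E := ℂ) h2 (ih h1 hF)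
    refine this.congr' (Eventually.of_forall fun x => ?_) (Eventually.of_forall fun x => rfl)
    simp only [smul_eq_mul, Complex.real_smul, pow_succ]
    ring

theorem logpow_mul_isBigO_top (n : ℕ) {F : ℝ → ℂ} {A : ℝ} :
    ∀ {b : ℝ}, b < A → F =O[atTop] (· ^ (-A)) →
    (fun x : ℝ => (Real.log x : ℂ) ^ n * F x) =O[atTop] (· ^ (-b)) := by
  induction n with
  | zero =>
    intro b hab hF
    simp only [pow_zero, one_mul]
    refine hF.trans (IsBigO.of_bound 1 ?_)
    filter_upwards [eventually_ge_atTop (1:ℝ)] with x hx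
    rw [one_mul, Real.norm_eq_abs, Real.norm_eq_abs,
      abs_of_nonneg (Real.rpow_nonneg (by linarith) _),
      abs_of_nonneg (Real.rpow_nonneg (by linarith) _)]
    exact Real.rpow_le_rpow_of_exponent_le hx (by linarith)
  | succ n ih =>
    intro b hab hF
    have h1 : (A + b) / 2 < A := by linarith
    have h2 : b < (A + b) / 2 := by linarith
    have := isBigO_rpow_top_log_smul (E := ℂ) h2 (ih h1 hF)
    refine this.congr' (Eventually.of_forall fun x => ?_) (Eventually.of_forall fun x => rfl)
    simp only [smul_eq_mul, Complex.real_smul, pow_succ]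
    ring
open MeasureTheory Set Filter Asymptotics Real Topology

theorem indicator_isBigO_zero :
    (fun x : ℝ => Set.indicator (Ioc (0:ℝ) 1) (fun _ => (1:ℂ)) x) =O[𝓝[>] (0:ℝ)]
      (· ^ (-(0:ℝ))) := by
  refine IsBigO.of_bound 1 (Eventually.of_forall fun x => ?_)
  rw [neg_zero, Real.rpow_zero]
  simp only [norm_one, mul_one, Set.indicator_apply]
  split_ifs <;> simp

theorem indicator_eventually_zero_atTop :
    ∀ᶠ x : ℝ in atTop, Set.indicator (Ioc (0:ℝ) 1) (fun _ => (1:ℂ)) x = 0 := by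
  filter_upwards [eventually_gt_atTop (1:ℝ)] with x hx
  exact Set.indicator_of_notMem (fun h => absurd h.2 (not_le.mpr hx)) _

theorem hasMellin_logpow : ∀ (n : ℕ) {s : ℂ}, 0 < s.re →
    HasMellin (fun x : ℝ => (Real.log x : ℂ) ^ n * Set.indicator (Ioc (0:ℝ) 1) (fun _ => (1:ℂ)) x)
      s ((-1) ^ n * (Nat.factorial n : ℂ) / s ^ (n + 1)) := by
  intro n
  induction n with
  | zero =>
    intro s hs
    simpa using hasMellin_one_Ioc hs
  | succ n ih =>
    intro s hs
    have hs0 : s ≠ 0 := fun h => by simp [h] at hs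
    set f : ℝ → ℂ :=
      fun x : ℝ => (Real.log x : ℂ) ^ n * Set.indicator (Ioc (0:ℝ) 1) (fun _ => (1:ℂ)) x with hf
    have hfc : LocallyIntegrableOn f (Ioi (0:ℝ)) := by
      have h1 := (ih (s := 1) (by simp)).1
      unfold MellinConvergent at h1
      refine IntegrableOn.locallyIntegrableOn ?_
      refine h1.congr_fun (fun x hx => ?_) measurableSet_Ioi
      simp
    have hf_top : f =O[atTop] (· ^ (-(s.re + 1))) := by
      refine IsBigO.of_bound 0 ?_
      filter_upwards [indicator_eventually_zero_atTop] with x hx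
      simp [hf, hx]
    have hf_bot : f =O[𝓝[>] (0:ℝ)] (· ^ (-(s.re / 2))) :=
      logpow_mul_isBigO_zero n (by linarith) indicator_isBigO_zero
    obtain ⟨hconv, hderiv⟩ := mellin_hasDerivAt_of_isBigO_rpow hfc hf_top
      (by linarith) hf_bot (by linarith)
    have hkey : ∀ x : ℝ, Real.log x • f x =
        (Real.log x : ℂ) ^ (n + 1) * Set.indicator (Ioc (0:ℝ) 1) (fun _ => (1:ℂ)) x := by
      intro x
      simp only [hf, Complex.real_smul, pow_succ]
      ring
    constructor
    · unfold MellinConvergent at hconv ⊢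
      exact hconv.congr_fun (fun x _ => by dsimp only; rw [← hkey]) measurableSet_Ioi
    · have hmel : mellin (fun x : ℝ => (Real.log x : ℂ) ^ (n + 1) *
          Set.indicator (Ioc (0:ℝ) 1) (fun _ => (1:ℂ)) x) s
          = mellin (fun x => Real.log x • f x) s := by
        unfold mellin
        exact setIntegral_congr_fun measurableSet_Ioi (fun x _ => by dsimp only; rw [hkey])
      rw [hmel]
      -- two HasDerivAt for the limit function
      have hev : (fun z => (-1) ^ n * (Nat.factorial n : ℂ) / z ^ (n + 1)) =ᶠ[𝓝 s]
          mellin f := by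
        have hopen : IsOpen {z : ℂ | 0 < z.re} := isOpen_lt continuous_const Complex.continuous_re
        filter_upwards [hopen.mem_nhds hs] with z hz
        exact ((ih hz).2).symm
      have hG : HasDerivAt (fun z : ℂ => (-1) ^ n * (Nat.factorial n : ℂ) / z ^ (n + 1))
          (mellin (fun x => Real.log x • f x) s) s :=
        (hderiv.congr_of_eventuallyEq hev)
      have hG' : HasDerivAt (fun z : ℂ => (-1) ^ n * (Nat.factorial n : ℂ) / z ^ (n + 1))
          ((-1) ^ n * (Nat.factorial n : ℂ) * ((-(n+1) : ℤ) * s ^ ((-(n+1) : ℤ) - 1))) s := by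
        have := (hasDerivAt_zpow (-(n+1) : ℤ) s (Or.inl hs0)).const_mul
          ((-1) ^ n * (Nat.factorial n : ℂ))
        refine this.congr_of_eventuallyEq (Eventually.of_forall fun z => ?_)
        show (-1) ^ n * (Nat.factorial n : ℂ) / z ^ (n + 1)
          = (-1) ^ n * (Nat.factorial n : ℂ) * z ^ (-(n+1) : ℤ)
        rw [show (-(n+1) : ℤ) = -((n+1 : ℕ) : ℤ) by push_cast; ring, zpow_neg, zpow_natCast,
          div_eq_mul_inv]
      have := hG.unique hG'
      rw [this]
      have hsz : s ^ ((-(n+1) : ℤ) - 1) = (s ^ (n + 1 + 1))⁻¹ := by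
        rw [show ((-(n+1) : ℤ) - 1) = -(n + 1 + 1 : ℕ) by push_cast; ring, zpow_neg, zpow_natCast]
      rw [hsz, Nat.factorial_succ]
      push_cast
      field_simp
      ring


section Aux

theorem mero_aux_schwartz_sub_isBigO (Φ : SchwartzMap ℝ ℂ) :
    (fun x : ℝ => Φ x - Φ 0) =O[𝓝[>] (0:ℝ)] (· ^ (-(-1:ℝ))) := by
  obtain ⟨C, hC⟩ : ∃ C, ∀ x : ℝ, ‖deriv (⇑Φ) x‖ ≤ C := by
    obtain ⟨C, -, hC⟩ := (SchwartzMap.derivCLM ℝ ℂ Φ).decay 0 0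
    refine ⟨C, fun x => ?_⟩
    have := hC x
    simpa [norm_iteratedFDeriv_zero, SchwartzMap.derivCLM_apply] using this
  refine IsBigO.of_bound C ?_
  filter_upwards [self_mem_nhdsWithin] with x (hx : (0:ℝ) < x)
  have key : ‖Φ x - Φ 0‖ ≤ C * ‖x - 0‖ :=
    convex_univ.norm_image_sub_le_of_norm_deriv_le
      (fun y _ => Φ.differentiableAt) (fun y _ => hC y) (mem_univ 0) (mem_univ x)
  simpa [neg_neg, Real.rpow_one, abs_of_pos hx] using key

theorem mero_aux_schwartz_isBigO_atTop (Φ : SchwartzMap ℝ ℂ) (A : ℝ) :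
    (fun x : ℝ => Φ x) =O[atTop] (· ^ (-A)) := by
  have h1 : (fun x : ℝ => Φ x) =O[atTop] fun x => ‖x‖ ^ (-A) :=
    (Φ.isBigO_cocompact_rpow (-A)).mono _root_.atTop_le_cocompact
  refine h1.congr' (Eventually.of_forall fun x => rfl) ?_
  filter_upwards [eventually_gt_atTop (0:ℝ)] with x hx
  rw [Real.norm_eq_abs, abs_of_pos hx]

theorem mero_aux_schwartz_isBigO_zero (Φ : SchwartzMap ℝ ℂ) :
    (fun x : ℝ => Φ x) =O[𝓝[>] (0:ℝ)] (· ^ (-(0:ℝ))) := by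
  refine IsBigO.of_bound (SchwartzMap.seminorm ℝ 0 0 Φ) (Eventually.of_forall fun x => ?_)
  rw [neg_zero, Real.rpow_zero, norm_one, mul_one]
  exact Φ.norm_le_seminorm ℝ x

end Aux


/-- For an even Schwartz function `Φ` and `n₀ ∈ ℕ`, the Mellin-type zeta integral
`Z(s) = ∫_{ℝˣ} Φ(a)|a|^s (log|a|)^{n₀} da/|a|` (defined for `Re(s) > 0`) differs from the
principal part `2Φ(0)·(-1)^{n₀} n₀! / s^{n₀+1}` by a function holomorphic on
`Re(s) > -1`; in particular `s^{n₀+1}·Z(s)` extends holomorphically past `s = 0`. -/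
theorem mellin_meromorphic_continuation
    (Φ : SchwartzMap ℝ ℂ) (n₀ : ℕ)
    (heven : ∀ a : ℝ, Φ (-a) = Φ a)
    (Z : ℂ → ℂ)
    (hZ : ∀ s : ℂ, Z s = ∫ a : ℝ, Φ a * ((|a| : ℝ) : ℂ) ^ s *
      ((Real.log |a| : ℝ) : ℂ) ^ n₀ * (((|a| : ℝ) : ℂ))⁻¹) :
    ∃ Ψ : ℂ → ℂ,
      (∀ s : ℂ, -1 < s.re → DifferentiableAt ℂ Ψ s) ∧
      (∀ s : ℂ, 0 < s.re →
        Z s = Ψ s + 2 * Φ 0 * (-1) ^ n₀ * (Nat.factorial n₀ : ℂ) / s ^ (n₀ + 1)) := by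

  set c : ℂ := Φ 0 with hc
  set ind : ℝ → ℂ := Set.indicator (Ioc (0:ℝ) 1) (fun _ => (1:ℂ)) with hind
  set h : ℝ → ℂ := fun x => (Real.log x : ℂ) ^ n₀ * ind x with hh
  set f : ℝ → ℂ := fun x => Φ x * (Real.log x : ℂ) ^ n₀ with hf
  set g : ℝ → ℂ := fun x => f x - c * h x with hg
  -- local integrability of g
  have hfcont : LocallyIntegrableOn f (Ioi (0:ℝ)) := by
    refine ContinuousOn.locallyIntegrableOn ?_ measurableSet_Ioi
    refine Φ.continuous.continuousOn.mul (ContinuousOn.pow ?_ n₀)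
    exact Complex.continuous_ofReal.comp_continuousOn
      (Real.continuousOn_log.mono (fun x hx => ne_of_gt hx))
  have hhint : IntegrableOn h (Ioi (0:ℝ)) := by
    have h1 := (hasMellin_logpow n₀ (s := 1) (by simp)).1
    unfold MellinConvergent at h1
    refine h1.congr_fun (fun x hx => ?_) measurableSet_Ioi
    simp [hh, hind]
  have hgc : LocallyIntegrableOn g (Ioi (0:ℝ)) := by
    refine hfcont.sub (IntegrableOn.locallyIntegrableOn ?_)
    exact hhint.const_mul c
  -- top estimate for f
  have hf_top : ∀ a : ℝ, f =O[atTop] (· ^ (-a)) := by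
    intro a
    have := logpow_mul_isBigO_top (F := fun x => Φ x) (A := a + 1) (b := a) n₀ (by linarith)
      (mero_aux_schwartz_isBigO_atTop Φ (a + 1))
    refine this.congr' (Eventually.of_forall fun x => ?_) (Eventually.of_forall fun x => rfl)
    simp only [hf]; ring
  -- h vanishes at infinity
  have hh_top : ∀ᶠ x : ℝ in atTop, h x = 0 := by
    filter_upwards [eventually_gt_atTop (1:ℝ)] with x hx
    have : ind x = 0 := Set.indicator_of_notMem (fun hm => absurd hm.2 (not_le.mpr hx)) _
    simp [hh, this]
  have hg_top : ∀ a : ℝ, g =O[atTop] (· ^ (-a)) := by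
    intro a
    refine ((hf_top a).sub (IsBigO.of_bound 0 ?_))
    filter_upwards [hh_top] with x hx
    simp [hx]
  -- bottom estimate for g
  have hg_bot : ∀ b : ℝ, -1 < b → g =O[𝓝[>] (0:ℝ)] (· ^ (-b)) := by
    intro b hb
    have hO := logpow_mul_isBigO_zero (F := fun x => Φ x - c) (A := -1) (b := b) n₀ hb
      (mero_aux_schwartz_sub_isBigO Φ)
    refine hO.congr' ?_ (Eventually.of_forall fun x => rfl)
    filter_upwards [Ioc_mem_nhdsGT one_pos] with x hx
    have : ind x = 1 := Set.indicator_of_mem hx _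
    simp only [hg, hf, hh, this, mul_one]
    ring
  refine ⟨fun s => 2 * mellin g s, fun s hs => ?_, fun s hs => ?_⟩
  · -- differentiability
    have hd : DifferentiableAt ℂ (mellin g) s :=
      mellin_differentiableAt_of_isBigO_rpow hgc (hg_top (s.re + 1)) (by linarith)
        (hg_bot ((s.re - 1) / 2) (by linarith)) (by linarith)
    exact hd.const_mul 2
  · -- the identity for 0 < re s
    have hs0 : s ≠ 0 := fun h0 => by simp [h0] at hs
    -- step 1 : Z s = 2 * mellin f s
    have habs : Z s = 2 * ∫ x in Ioi (0:ℝ),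
        Φ x * ((x : ℝ) : ℂ) ^ s * ((Real.log x : ℝ) : ℂ) ^ n₀ * (((x : ℝ) : ℂ))⁻¹ := by
      rw [hZ s]
      rw [show (fun a : ℝ => Φ a * ((|a| : ℝ) : ℂ) ^ s * ((Real.log |a| : ℝ) : ℂ) ^ n₀ *
          (((|a| : ℝ) : ℂ))⁻¹)
        = fun a : ℝ => (fun x : ℝ => Φ x * ((x : ℝ) : ℂ) ^ s * ((Real.log x : ℝ) : ℂ) ^ n₀ *
          (((x : ℝ) : ℂ))⁻¹) |a| from funext fun a => ?_]
      · exact my_integral_comp_abs (fun x : ℝ => Φ x * ((x : ℝ) : ℂ) ^ s * ((Real.log x : ℝ) : ℂ) ^ n₀ * (((x : ℝ) : ℂ))⁻¹)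
      · rcases le_or_gt 0 a with ha | ha
        · rw [abs_of_nonneg ha]
        · rw [abs_of_neg ha, ← heven a]
    have hmf : (∫ x in Ioi (0:ℝ),
        Φ x * ((x : ℝ) : ℂ) ^ s * ((Real.log x : ℝ) : ℂ) ^ n₀ * (((x : ℝ) : ℂ))⁻¹)
        = mellin f s := by
      refine (setIntegral_congr_fun measurableSet_Ioi (fun x hx => ?_)).symm
      have hx0 : (x : ℂ) ≠ 0 := Complex.ofReal_ne_zero.mpr (ne_of_gt hx)
      rw [smul_eq_mul, Complex.cpow_sub _ _ hx0, Complex.cpow_one, div_eq_mul_inv]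
      simp only [hf]
      ring
    -- step 2 : mellin f = mellin g + c * mellin h
    have hconv_h : MellinConvergent h s := (hasMellin_logpow n₀ hs).1
    have hmel_h : mellin h s = (-1) ^ n₀ * (Nat.factorial n₀ : ℂ) / s ^ (n₀ + 1) :=
      (hasMellin_logpow n₀ hs).2
    have hconv_ch : MellinConvergent (fun x => c * h x) s := by
      simpa only [smul_eq_mul] using hconv_h.const_smul (𝕜 := ℂ) c
    have hf_bot : f =O[𝓝[>] (0:ℝ)] (· ^ (-(s.re / 2))) := by
      have := logpow_mul_isBigO_zero (F := fun x => Φ x) (A := 0) (b := s.re / 2) n₀ (by linarith)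
        (mero_aux_schwartz_isBigO_zero Φ)
      refine this.congr' (Eventually.of_forall fun x => ?_) (Eventually.of_forall fun x => rfl)
      simp only [hf]; ring
    have hconv_f : MellinConvergent f s :=
      mellinConvergent_of_isBigO_rpow hfcont (hf_top (s.re + 1)) (by linarith) hf_bot
        (by linarith)
    have hsub := hasMellin_sub hconv_f hconv_ch
    have hmg : mellin g s = mellin f s - mellin (fun x => c * h x) s := hsub.2
    have hch : mellin (fun x => c * h x) s = c * mellin h s := by
      simpa only [smul_eq_mul] using mellin_const_smul h s (c : ℂ)
    rw [habs, hmf]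
    rw [show mellin f s = mellin g s + c * mellin h s by rw [hmg, hch]; ring]
    rw [hmel_h, hc]
    ring
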